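/- Let n = 2m with m ≥ 1, and let E = {λ ∈ F_{2^n} : λ^{2^m} + λ = 1}. Then for every x ∈ F_{2^n} \ F_{2^m} there exists a unique pair (u, λ) ∈ F_{2^m}^* × E such that x = uλ. -/
import Mathlib


open Finset

theorem stmt_0 (m : ℕ) (hm : 1 ≤ m) (F : Type*) [Field F] [Fintype F]
    (hF : Fintype.card F = 2 ^ (2 * m)) (x : F) (hx : x ^ 2 ^ m ≠ x) :
    ∃! p : F × F, p.1 ^ 2 ^ m = p.1 ∧ p.1 ≠ 0 ∧ p.2 ^ 2 ^ m + p.2 = 1 ∧ x = p.1 * p.2 := by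
  have hchar2 : ringChar F = 2 := by
    rw [FiniteField.even_card_iff_char_two, hF, Nat.pow_mod]
    simp [Nat.zero_pow (by omega : 0 < 2 * m)]
  haveI : CharP F 2 := ringChar.of_eq hchar2
  haveI : Fact (Nat.Prime 2) := ⟨Nat.prime_two⟩
  have hq : ∀ a b : F, (a + b) ^ 2 ^ m = a ^ 2 ^ m + b ^ 2 ^ m := fun a b =>
    add_pow_char_pow ..
  have hxx : (x ^ 2 ^ m) ^ 2 ^ m = x := by
    rw [← pow_mul, ← pow_add]
    have h2 : m + m = 2 * m := by ring
    rw [h2, ← hF, FiniteField.pow_card]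
  set u : F := x ^ 2 ^ m + x with hu_def
  have hu0 : u ≠ 0 := by
    intro h
    apply hx
    have := CharTwo.add_eq_iff_eq_add.mp h
    simpa using this
  have hufix : u ^ 2 ^ m = u := by
    rw [hu_def, hq, hxx, add_comm]
  refine ⟨(u, x * u⁻¹), ⟨hufix, hu0, ?_, by field_simp⟩, ?_⟩
  · rw [mul_pow, inv_pow, hufix, ← add_mul, ← hu_def, mul_inv_cancel₀ hu0]
  · rintro ⟨v, μ⟩ ⟨hv, hv0, hμ, hxvμ⟩
    dsimp only at hv hv0 hμ hxvμ
    have hμ' : μ ^ 2 ^ m = 1 + μ := CharTwo.add_eq_iff_eq_add.mp hμ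
    have h1 : x ^ 2 ^ m = v + x := by
      rw [hxvμ, mul_pow, hv, hμ', mul_add, mul_one]
    have hvu : v = u := by
      rw [hu_def, h1, add_assoc, CharTwo.add_self_eq_zero, add_zero]
    have hμu : μ = x * u⁻¹ := by
      rw [hxvμ, hvu, mul_comm, ← mul_assoc, inv_mul_cancel₀ hu0, one_mul]
    simp [hvu, hμu]
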